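/- Let S = Sz(q) with q = 2^(2m+1) ≥ 8, and let i > 1 divide q − 1. Then the number of elements of S of order i equals φ(i)·q^2(q^2+1)/2. -/

import Mathlib

open Subgroup Finset

theorem stmt_12 (m : ℕ) (hm : 1 ≤ m) (S : Type*) [Group S] [Fintype S]
    (hcard : Fintype.card S =
      (2 ^ (2 * m + 1)) ^ 2 * ((2 ^ (2 * m + 1)) ^ 2 + 1) * (2 ^ (2 * m + 1) - 1))
    (V : Subgroup S) (hcyc : IsCyclic V)
    (hV : Nat.card V = 2 ^ (2 * m + 1) - 1)
    (hindex : Subgroup.relIndex V (Subgroup.normalizer (V : Set S)) = 2)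
    (hpart : ∀ x : S, x ≠ 1 → orderOf x ∣ 2 ^ (2 * m + 1) - 1 →
      ∃! K : Subgroup S,
        (∃ g : S, K = Subgroup.map (MulAut.conj g).toMonoidHom V) ∧ x ∈ K)
    (i : ℕ) (hi : 1 < i) (hdvd : i ∣ 2 ^ (2 * m + 1) - 1) :
    Nat.card {x : S | orderOf x = i} =
      Nat.totient i * ((2 ^ (2 * m + 1)) ^ 2 * ((2 ^ (2 * m + 1)) ^ 2 + 1)) / 2 := by
  classical
  set q : ℕ := 2 ^ (2 * m + 1) with hq
  have hq8 : 8 ≤ q := by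
    have : (2:ℕ) ^ 3 ≤ 2 ^ (2 * m + 1) := Nat.pow_le_pow_right (by norm_num) (by omega)
    simpa [hq] using this
  -- membership in conjugates
  have hmem : ∀ (g x : S), x ∈ Subgroup.map (MulAut.conj g).toMonoidHom V ↔
      g⁻¹ * x * g ∈ V := by
    intro g x
    rw [Subgroup.mem_map_equiv, MulAut.conj_symm_apply]
  -- equality of conjugates iff normalizer condition
  have heq : ∀ g h : S, (Subgroup.map (MulAut.conj g).toMonoidHom V =
      Subgroup.map (MulAut.conj h).toMonoidHom V) ↔ g⁻¹ * h ∈ (Subgroup.normalizer (V : Set S)) := by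
    intro g h
    rw [Subgroup.mem_normalizer_iff, SetLike.ext_iff]
    constructor
    · intro H n
      have key := H (h * n * h⁻¹)
      rw [hmem, hmem] at key
      have e1 : g⁻¹ * (h * n * h⁻¹) * g = (g⁻¹ * h) * n * (g⁻¹ * h)⁻¹ := by group
      have e2 : h⁻¹ * (h * n * h⁻¹) * h = n := by group
      rw [e1, e2] at key
      exact key.symm
    · intro H x
      have key := H (h⁻¹ * x * h)
      have e1 : (g⁻¹ * h) * (h⁻¹ * x * h) * (g⁻¹ * h)⁻¹ = g⁻¹ * x * g := by group
      rw [e1] at key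
      rw [hmem, hmem]
      exact key.symm
  -- the finset of conjugates
  set C : Finset (Subgroup S) :=
    Finset.univ.image (fun g : S => Subgroup.map (MulAut.conj g).toMonoidHom V) with hCdef
  -- number of conjugates = index of the normalizer
  have hCcard : C.card = (Subgroup.normalizer (V : Set S)).index := by
    rw [Subgroup.index_eq_card, ← Fintype.card_coe C, ← Nat.card_eq_fintype_card]
    apply Nat.card_congr
    symm
    refine Equiv.ofBijective
      (fun x => Quotient.liftOn' x
        (fun g => (⟨Subgroup.map (MulAut.conj g).toMonoidHom V, by
          simp [hCdef]⟩ : {K // K ∈ C}))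
        (fun a b hab => Subtype.ext ((heq a b).2 ((QuotientGroup.leftRel_apply).1 hab)))) ?_
    constructor
    · intro x y
      refine Quotient.inductionOn₂' x y (fun a b hab => ?_)
      have := congrArg Subtype.val hab
      simp only at this
      exact Quotient.sound' ((QuotientGroup.leftRel_apply).2 ((heq a b).1 this))
    · rintro ⟨K, hK⟩
      simp only [hCdef, Finset.mem_image, Finset.mem_univ, true_and] at hK
      obtain ⟨g, rfl⟩ := hK
      exact ⟨QuotientGroup.mk g, rfl⟩
  -- card of the normalizer
  have hVN : Nat.card (Subgroup.normalizer (V : Set S)) = (q - 1) * 2 := by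
    have h1 := Subgroup.card_mul_index (V.subgroupOf (Subgroup.normalizer (V : Set S)))
    have h2 : Nat.card (V.subgroupOf (Subgroup.normalizer (V : Set S))) = Nat.card V :=
      Nat.card_congr (Subgroup.subgroupOfEquivOfLe Subgroup.le_normalizer).toEquiv
    rw [h2, hV, show (V.subgroupOf (Subgroup.normalizer (V : Set S))).index = V.relIndex (Subgroup.normalizer (V : Set S)) from rfl,
      hindex] at h1
    exact h1.symm
  -- 2 * index of normalizer = q^2*(q^2+1)
  have htwo : 2 * (Subgroup.normalizer (V : Set S)).index = q ^ 2 * (q ^ 2 + 1) := by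
    have h1 := Subgroup.card_mul_index (Subgroup.normalizer (V : Set S))
    rw [hVN, Nat.card_eq_fintype_card, hcard] at h1
    have h2 : (q - 1) * (2 * (Subgroup.normalizer (V : Set S)).index) = (q - 1) * (q ^ 2 * (q ^ 2 + 1)) := by
      rw [← mul_assoc]
      calc (q - 1) * 2 * (Subgroup.normalizer (V : Set S)).index = q ^ 2 * (q ^ 2 + 1) * (q - 1) := h1
        _ = (q - 1) * (q ^ 2 * (q ^ 2 + 1)) := by ring
    exact Nat.eq_of_mul_eq_mul_left (by omega) h2
  -- fiber function
  set ffib : S → Subgroup S := fun x =>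
    if hx : x ≠ 1 ∧ orderOf x ∣ q - 1 then (hpart x hx.1 hx.2).choose else ⊥ with hffib
  set X : Finset S := Finset.univ.filter (fun x => orderOf x = i) with hX
  have hXmem : ∀ x ∈ X, x ≠ 1 ∧ orderOf x ∣ q - 1 := by
    intro x hx
    rw [hX, Finset.mem_filter] at hx
    refine ⟨fun h1 => ?_, hx.2 ▸ hdvd⟩
    rw [h1, orderOf_one] at hx
    omega
  have hffib_spec : ∀ x ∈ X,
      ((∃ g : S, ffib x = Subgroup.map (MulAut.conj g).toMonoidHom V) ∧ x ∈ ffib x) ∧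
      ∀ K : Subgroup S, ((∃ g : S, K = Subgroup.map (MulAut.conj g).toMonoidHom V) ∧ x ∈ K) →
        K = ffib x := by
    intro x hx
    obtain ⟨h1, h2⟩ := hXmem x hx
    have := (hpart x h1 h2).choose_spec
    rw [hffib]
    simp only [dif_pos (And.intro h1 h2)]
    exact this
  have hmemC : ∀ x ∈ X, ffib x ∈ C := by
    intro x hx
    obtain ⟨⟨⟨g, hg⟩, _⟩, _⟩ := hffib_spec x hx
    simp [hCdef, hg]
  -- fiberwise counting
  have hfib := Finset.card_eq_sum_card_fiberwise hmemC
  -- each fiber has φ(i) elements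
  have hfiber : ∀ K ∈ C, (X.filter fun x => ffib x = K).card = Nat.totient i := by
    intro K hK
    simp only [hCdef, Finset.mem_image, Finset.mem_univ, true_and] at hK
    obtain ⟨g, hg⟩ := hK
    -- K is cyclic of order q-1
    have eK : (V : Type _) ≃* K := hg ▸ (MulAut.conj g).subgroupMap V
    have hKcyc : IsCyclic K := isCyclic_of_surjective eK.toMonoidHom eK.surjective
    have hKcard : Fintype.card K = q - 1 := by
      rw [← Nat.card_eq_fintype_card, ← Nat.card_congr eK.toEquiv, hV]
    have hdvdK : i ∣ Fintype.card K := hKcard ▸ hdvd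
    have hcount := IsCyclic.card_orderOf_eq_totient (α := K) (d := i) hdvdK
    -- transfer the count to S
    have himg : X.filter (fun x => ffib x = K) =
        (Finset.univ.filter fun a : K => orderOf a = i).image (Subtype.val) := by
      ext x
      simp only [Finset.mem_filter, Finset.mem_image, Finset.mem_univ, true_and]
      constructor
      · rintro ⟨hxX, hfx⟩
        obtain ⟨_, hxmem⟩ := (hffib_spec x hxX).1
        rw [hfx] at hxmem
        refine ⟨⟨x, hxmem⟩, ?_, rfl⟩
        rw [Subgroup.orderOf_mk]
        exact (Finset.mem_filter.1 hxX).2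
      · rintro ⟨⟨x, hxK⟩, hord, rfl⟩
        rw [Subgroup.orderOf_mk] at hord
        have hxX : x ∈ X := by
          rw [hX, Finset.mem_filter]
          exact ⟨Finset.mem_univ _, hord⟩
        refine ⟨hxX, ?_⟩
        exact ((hffib_spec x hxX).2 K ⟨⟨g, hg.symm⟩, hxK⟩).symm
    rw [himg, Finset.card_image_of_injective _ Subtype.val_injective]
    exact hcount
  -- put everything together
  have hXcard : X.card = (Subgroup.normalizer (V : Set S)).index * Nat.totient i := by
    rw [hfib, Finset.sum_congr rfl hfiber, Finset.sum_const, smul_eq_mul, hCcard]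
  have hLHS : Nat.card {x : S | orderOf x = i} = X.card := by
    rw [Nat.card_eq_fintype_card, hX]
    exact Fintype.card_subtype _
  rw [hLHS, hXcard, ← htwo,
    show Nat.totient i * (2 * (Subgroup.normalizer (V : Set S)).index) = 2 * ((Subgroup.normalizer (V : Set S)).index * Nat.totient i)
      by ring,
    Nat.mul_div_cancel_left _ (by norm_num)]
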